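/- Let λ be an indecomposable permutation of length ℓ > 1 and let 1 ≤ m ≤ n. Then Σ_{S ∈ EZ^{λ^m,λ^n}} (−1)^{|S|} = (−1)^{n−m−1}·C(n−1,m−1). -/

import Mathlib

open scoped Classical

set_option maxHeartbeats 1000000

/-! ## The permutation pattern poset -/

/-- The type of all (finite) permutations: a permutation of length `n` is an element of
`Equiv.Perm (Fin n)`; the letter in position `i` is `p.2 i` (letters compared via the
order on `Fin n`). -/
abbrev PermPat : Type := Σ n : ℕ, Equiv.Perm (Fin n)

/-- Pattern containment: `PatLe σ π` iff `π` has a subsequence in the same relative order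
as `σ`, i.e. there is an occurrence of `σ` in `π`. -/
def PatLe (p q : PermPat) : Prop :=
  ∃ f : Fin p.1 ↪o Fin q.1, ∀ i j : Fin p.1, p.2 i < p.2 j ↔ q.2 (f i) < q.2 (f j)

lemma patLe_refl (p : PermPat) : PatLe p p := by
  refine ⟨(OrderIso.refl (Fin p.1)).toOrderEmbedding, fun i j => ?_⟩
  simp

lemma patLe_trans {p q r : PermPat} (h1 : PatLe p q) (h2 : PatLe q r) : PatLe p r := by
  obtain ⟨f, hf⟩ := h1
  obtain ⟨g, hg⟩ := h2
  exact ⟨f.trans g, fun i j => (hf i j).trans (hg (f i) (f j))⟩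

lemma PatLe.len_le {p q : PermPat} (h : PatLe p q) : p.1 ≤ q.1 := by
  obtain ⟨f, -⟩ := h
  simpa using Fintype.card_le_of_embedding f.toEmbedding

lemma StrictMono.fin_apply_eq {n : ℕ} {f : Fin n → Fin n} (hf : StrictMono f) (i : Fin n) :
    f i = i := by
  have hle : ∀ m : ℕ, ∀ j : Fin n, j.val = m → j.val ≤ (f j).val := by
    intro m
    induction m with
    | zero => intro j hj; omega
    | succ m ih =>
      intro j hj
      have hm : m < n := by omega
      have h1 : f ⟨m, hm⟩ < f j := hf (by simp [Fin.lt_def]; omega)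
      have h2 := ih ⟨m, hm⟩ rfl
      simp only [Fin.lt_def] at h1
      simp only [Fin.val_mk] at h1 h2
      omega
  have hge : ∀ m : ℕ, ∀ j : Fin n, j.val + m + 1 = n → (f j).val ≤ j.val := by
    intro m
    induction m with
    | zero => intro j hj; have := (f j).isLt; omega
    | succ m ih =>
      intro j hj
      have hs : j.val + 1 < n := by omega
      have h1 : f j < f ⟨j.val + 1, hs⟩ := hf (by simp [Fin.lt_def])
      have h2 := ih ⟨j.val + 1, hs⟩ (by simp only [Fin.val_mk]; omega)
      simp only [Fin.lt_def] at h1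
      simp only [Fin.val_mk] at h1 h2
      omega
  exact Fin.ext (le_antisymm (hge (n - 1 - i.val) i (by have := i.isLt; omega)) (hle i.val i rfl))

lemma patLe_antisymm {p q : PermPat} (hpq : PatLe p q) (hqp : PatLe q p) : p = q := by
  obtain ⟨k, σ⟩ := p
  obtain ⟨n, π⟩ := q
  have hkn : k = n := le_antisymm hpq.len_le hqp.len_le
  subst hkn
  obtain ⟨f, hf⟩ := hpq
  have hfid : ∀ i, f i = i := fun i => f.strictMono.fin_apply_eq i
  have key : ∀ i j : Fin k, σ i < σ j ↔ π i < π j := by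
    intro i j
    simpa [hfid] using hf i j
  have hmono : StrictMono (fun a => π (σ.symm a)) := by
    intro a b hab
    have : σ (σ.symm a) < σ (σ.symm b) := by simpa using hab
    exact (key _ _).mp this
  have hid : ∀ a, π (σ.symm a) = a := fun a => hmono.fin_apply_eq a
  have hσπ : σ = π := by
    apply Equiv.ext
    intro x
    have := hid (σ x)
    simpa using this.symm
  rw [hσπ]

/-- The permutation pattern poset `𝒫`. -/
instance : PartialOrder PermPat where
  le := PatLe
  le_refl := patLe_refl
  le_trans _ _ _ := patLe_trans
  le_antisymm _ _ := patLe_antisymm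

lemma PermPat.le_def {p q : PermPat} : p ≤ q ↔ PatLe p q := Iff.rfl

/-! ## The Möbius function of the pattern poset

`permMu` is the Möbius function of the pattern poset: `μ(σ,σ) = 1`,
`μ(σ,π) = -∑_{σ ≤ z < π} μ(σ,z)` for `σ < π`, and `μ(σ,π) = 0` if `σ ≰ π`.
(Every `z < π` is of length strictly smaller than `π`, so the inner sum ranges over
the permutations of each length `m < |π|`.) -/
noncomputable def permMu (p q : PermPat) : ℤ :=
  if p = q then 1
  else if PatLe p q then
    - ∑ m : Fin q.1, ∑ z : Equiv.Perm (Fin m.1),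
        if PatLe p ⟨m.1, z⟩ ∧ PatLe ⟨m.1, z⟩ q then permMu p ⟨m.1, z⟩ else 0
  else 0
termination_by q.1
decreasing_by exact m.isLt

/-! ## The Möbius function of a finite poset -/

/-- The Möbius function `μ(a,b)` of a finite poset. -/
noncomputable def muPair {X : Type*} [PartialOrder X] [Fintype X] (a b : X) : ℤ :=
  if a = b then 1
  else if a ≤ b then
    - ∑ z ∈ (Finset.univ.filter fun z : X => a ≤ z ∧ z < b).attach, muPair a z.1
  else 0
termination_by Set.ncard {z : X | z < b}
decreasing_by
  rename_i z
  have hz : z.1 < b := ((Finset.mem_filter.mp z.2).2).2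
  exact Set.ncard_lt_ncard
    ((Set.ssubset_iff_of_subset (fun w hw => lt_trans hw hz)).mpr ⟨z.1, hz, fun hmem => absurd hmem (by exact lt_irrefl _)⟩)
    (Set.toFinite _)

instance instFiniteOption' {α : Type*} [Finite α] : Finite (Option α) :=
  Finite.of_equiv (α ⊕ PUnit.{1}) (Equiv.optionEquivSumPUnit.{0} α).symm
instance {α : Type*} [Finite α] : Finite (WithTop α) := inferInstanceAs (Finite (Option α))
instance {α : Type*} [Finite α] : Finite (WithBot α) := inferInstanceAs (Finite (Option α))
instance {α : Type*} [Fintype α] : Fintype (WithTop α) := inferInstanceAs (Fintype (Option α))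
instance {α : Type*} [Fintype α] : Fintype (WithBot α) := inferInstanceAs (Fintype (Option α))

/-- For a finite poset `X`, `muHat X` is `μ(0̂,1̂)` computed in the poset obtained from `X`
by adjoining a new bottom element `0̂` and a new top element `1̂`.  (For infinite `X` the
junk value `0` is returned.) -/
noncomputable def muHat (X : Type*) [PartialOrder X] : ℤ :=
  if h : Finite X then
    letI := h
    letI : Fintype (WithBot (WithTop X)) := Fintype.ofFinite _
    muPair (⊥ : WithBot (WithTop X)) ⊤
  else 0

/-! ## Adjacencies, embeddings, normality -/

/-- The position one step before `j` (or `j` itself when `j = 0`). -/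
def prevPos {n : ℕ} (j : Fin n) : Fin n := ⟨j.val - 1, lt_of_le_of_lt (Nat.sub_le _ _) j.isLt⟩

/-- `Linked π j` says position `j` is linked to the preceding position, i.e. the letters in
positions `j-1, j` have consecutive values.  These are exactly the positions lying in the
tail of some adjacency of `π` (an adjacency is a maximal factor of consecutively valued
increasing or decreasing letters; its tail is all but its first letter). -/
def Linked {n : ℕ} (π : Equiv.Perm (Fin n)) (j : Fin n) : Prop :=
  0 < j.val ∧ ((π j).val + 1 = (π (prevPos j)).val ∨ (π (prevPos j)).val + 1 = (π j).val)

/-- The number of adjacencies (maximal linked runs) of `π`. -/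
noncomputable def numBlocks {n : ℕ} (π : Equiv.Perm (Fin n)) : ℕ :=
  (Finset.univ.filter fun j : Fin n => ¬ Linked π j).card

/-- The index (starting from 0) of the adjacency of `π` containing position `j`. -/
noncomputable def blockIdx {n : ℕ} (π : Equiv.Perm (Fin n)) (j : Fin n) : ℕ :=
  (Finset.univ.filter fun m : Fin n => ¬ Linked π m ∧ m ≤ j).card - 1

/-- The set of positions in the `i`-th adjacency of `π`. -/
noncomputable def blockF {n : ℕ} (π : Equiv.Perm (Fin n)) (i : ℕ) : Finset (Fin n) :=
  Finset.univ.filter fun j => blockIdx π j = i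

/-- The standardization of an injective tuple `v` of values in `Fin n`: the permutation of
`Fin m` whose letters are in the same relative order as `v`. -/
noncomputable def stdize {m n : ℕ} (v : Fin m → Fin n) (hv : Function.Injective v) :
    Equiv.Perm (Fin m) :=
  (Equiv.ofInjective v hv).trans
    (monoEquivOfFin (Set.range v)
      (by rw [Set.card_range_of_injective hv, Fintype.card_fin])).symm.toEquiv

/-- The pattern (as an abstract permutation) formed by the letters of `π` in the set `E`
of positions. -/
noncomputable def patternOf {n : ℕ} (π : Equiv.Perm (Fin n)) (E : Finset (Fin n)) : PermPat :=
  ⟨E.card, stdize (fun i => π ((E.orderIsoOfFin rfl) i))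
    (by
      intro i j hij
      exact (E.orderIsoOfFin rfl).injective (Subtype.coe_injective (π.injective hij)))⟩

/-- `E` is (the set of positions of the nonzero entries of) an embedding of `p` in `π`:
the letters of `π` in positions `E` form an occurrence of `p`. -/
def IsEmb (p : PermPat) {n : ℕ} (π : Equiv.Perm (Fin n)) (E : Finset (Fin n)) : Prop :=
  patternOf π E = p

/-- An embedding (given by its set `E` of nonzero positions) is normal if every position in
the tail of an adjacency of `π` is nonzero. -/
def IsNormal {n : ℕ} (π : Equiv.Perm (Fin n)) (E : Finset (Fin n)) : Prop :=
  ∀ j, Linked π j → j ∈ E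

/-- `NE p π`: the number of normal embeddings of `p` in `π`. -/
noncomputable def NE (p : PermPat) {n : ℕ} (π : Equiv.Perm (Fin n)) : ℕ :=
  Set.ncard {E : Finset (Fin n) | IsEmb p π E ∧ IsNormal π E}

/-- An embedding is rightmost if, within each adjacency of `π`, all of its zero entries
precede all of its nonzero entries. -/
def IsRightmost {n : ℕ} (π : Equiv.Perm (Fin n)) (E : Finset (Fin n)) : Prop :=
  ∀ i j : Fin n, blockIdx π i = blockIdx π j → i ≤ j → i ∈ E → j ∈ E

/-- Membership in `Ê^{p,π}`, the set of rightmost embeddings of `p` in `π`. -/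
def EhatMem (p : PermPat) {n : ℕ} (π : Equiv.Perm (Fin n)) (E : Finset (Fin n)) : Prop :=
  IsEmb p π E ∧ IsRightmost π E

/-- Membership in `EZ^{p,π}`: `S` is a nonempty set of rightmost embeddings of `p` in `π`
whose zero sets have empty intersection (every position is nonzero in some member). -/
def EZmem (p : PermPat) {n : ℕ} (π : Equiv.Perm (Fin n)) (S : Finset (Finset (Fin n))) : Prop :=
  S.Nonempty ∧ (∀ E ∈ S, EhatMem p π E) ∧ ∀ j : Fin n, ∃ E ∈ S, j ∈ E

/-- The sum `∑_{S ∈ EZ^{p,π}} (-1)^{|S|}`. -/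
noncomputable def EZsum (p : PermPat) {n : ℕ} (π : Equiv.Perm (Fin n)) : ℤ :=
  ∑ S ∈ Finset.univ.filter (fun S : Finset (Finset (Fin n)) => EZmem p π S), (-1 : ℤ) ^ S.card

/-! ## The adjacency decomposition and the posets `P(η)`, `A^{σ,π}` -/

/-- `π̂`, the adjacency decomposition of `π`, as a tuple of permutations. -/
noncomputable def Phat {n : ℕ} (π : Equiv.Perm (Fin n)) : Fin (numBlocks π) → PermPat :=
  fun i => patternOf π (blockF π i.val)

/-- `η̂`, the decomposition of an embedding (with nonzero positions `E`) along the
adjacencies of `π`. -/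
noncomputable def etaHat {n : ℕ} (π : Equiv.Perm (Fin n)) (E : Finset (Fin n)) :
    Fin (numBlocks π) → PermPat :=
  fun i => patternOf π (E.filter fun j => blockIdx π j = i.val)

/-- The product poset `P(η) = [η̂_1,π̂_1] × ⋯ × [η̂_t,π̂_t]`, as a subset of the product of
copies of the pattern poset indexed by the adjacencies of `π`. -/
noncomputable def Pemb {n : ℕ} (π : Equiv.Perm (Fin n)) (E : Finset (Fin n)) :
    Set (Fin (numBlocks π) → PermPat) :=
  Set.Icc (etaHat π E) (Phat π)

/-- `P(η)°`: the product poset `P(η)` with its bottom element `η̂` and top element `π̂`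
removed. -/
noncomputable def PembO {n : ℕ} (π : Equiv.Perm (Fin n)) (E : Finset (Fin n)) :
    Set (Fin (numBlocks π) → PermPat) :=
  Pemb π E \ {etaHat π E, Phat π}

/-- `A^{p,π} = ⋃_{η ∈ Ê^{p,π}} P(η)°`. -/
noncomputable def Aspace (p : PermPat) {n : ℕ} (π : Equiv.Perm (Fin n)) :
    Set (Fin (numBlocks π) → PermPat) :=
  ⋃ E ∈ {E : Finset (Fin n) | EhatMem p π E}, PembO π E

/-! ## Sundry notions -/

/-- The number of descents of a permutation. -/
noncomputable def desNum {n : ℕ} (π : Equiv.Perm (Fin n)) : ℕ :=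
  (Finset.univ.filter fun j : Fin n => ∃ h : j.val + 1 < n, π ⟨j.val + 1, h⟩ < π j).card

/-- The direct sum of two permutations. -/
def dsum {a b : ℕ} (σ : Equiv.Perm (Fin a)) (τ : Equiv.Perm (Fin b)) :
    Equiv.Perm (Fin (a + b)) :=
  finSumFinEquiv.symm.trans ((Equiv.sumCongr σ τ).trans finSumFinEquiv)

/-- A permutation is indecomposable if it is nonempty and not the direct sum of two
nonempty permutations. -/
def Indecomp (p : PermPat) : Prop :=
  0 < p.1 ∧ ¬ ∃ (a b : ℕ) (σ : Equiv.Perm (Fin a)) (τ : Equiv.Perm (Fin b)),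
    0 < a ∧ 0 < b ∧ p = ⟨a + b, dsum σ τ⟩

/-- `dpow lam m = lam ⊕ ⋯ ⊕ lam` (`m` summands). -/
def dpow {l : ℕ} (lam : Equiv.Perm (Fin l)) : (m : ℕ) → Equiv.Perm (Fin (m * l))
  | 0 => (finCongr (Nat.zero_mul l).symm).permCongr 1
  | m + 1 => (finCongr (by ring : m * l + l = (m + 1) * l)).permCongr (dsum (dpow lam m) lam)

/-- Direct sum of permutations, on `PermPat`. -/
def dsumP (p q : PermPat) : PermPat := ⟨p.1 + q.1, dsum p.2 q.2⟩

/-- The direct sum of a list of permutations. -/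
def dsumList : List PermPat → PermPat
  | [] => ⟨0, 1⟩
  | p :: L => dsumP p (dsumList L)

/-- The increasing permutation `ι_n = 12⋯n`. -/
def iota (n : ℕ) : PermPat := ⟨n, 1⟩


/-! ### Auxiliary lemmas -/

section Aux

/-- Two permutations of `Fin k` with the same relative comparisons are equal. -/
lemma perm_rigid {k : ℕ} {σ τ : Equiv.Perm (Fin k)}
    (h : ∀ i j, σ i < σ j ↔ τ i < τ j) : σ = τ := by
  have h1 : PatLe ⟨k, σ⟩ ⟨k, τ⟩ :=
    ⟨(OrderIso.refl (Fin k)).toOrderEmbedding, fun i j => by simpa using h i j⟩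
  have h2 : PatLe ⟨k, τ⟩ ⟨k, σ⟩ :=
    ⟨(OrderIso.refl (Fin k)).toOrderEmbedding, fun i j => by simpa using (h i j).symm⟩
  have h3 := patLe_antisymm h1 h2
  exact eq_of_heq (Sigma.mk.inj_iff.mp h3).2

lemma stdize_lt_iff {m n : ℕ} (v : Fin m → Fin n) (hv : Function.Injective v) (i j : Fin m) :
    stdize v hv i < stdize v hv j ↔ v i < v j := by
  have key : ∀ x : Fin m, stdize v hv x = (monoEquivOfFin (Set.range v)
      (by rw [Set.card_range_of_injective hv, Fintype.card_fin])).symm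
        ⟨v x, Set.mem_range_self x⟩ := by
    intro x
    simp only [stdize, Equiv.trans_apply, Equiv.ofInjective_apply]
    rfl
  rw [key, key, OrderIso.lt_iff_lt, Subtype.mk_lt_mk]

lemma isEmb_iff {k : ℕ} (q : Equiv.Perm (Fin k)) {n : ℕ} (π : Equiv.Perm (Fin n))
    (E : Finset (Fin n)) :
    IsEmb ⟨k, q⟩ π E ↔ ∃ f : Fin k ↪o Fin n,
      (∀ x : Fin n, x ∈ E ↔ ∃ i, f i = x) ∧ (∀ i j, q i < q j ↔ π (f i) < π (f j)) := by
  constructor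
  · intro hE
    unfold IsEmb patternOf at hE
    obtain ⟨hcard, hheq⟩ := Sigma.mk.inj_iff.mp hE
    subst hcard
    have hq : q = stdize (fun i => π ((E.orderIsoOfFin rfl) i))
        (by intro i j hij
            exact (E.orderIsoOfFin rfl).injective (Subtype.coe_injective (π.injective hij))) :=
      (eq_of_heq hheq).symm
    refine ⟨(E.orderEmbOfFin rfl), fun x => ?_, fun i j => ?_⟩
    · constructor
      · intro hx
        have hx2 : x ∈ Set.range (E.orderEmbOfFin rfl) := by
          rw [Finset.range_orderEmbOfFin]
          exact hx
        exact hx2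
      · rintro ⟨i, rfl⟩
        exact Finset.orderEmbOfFin_mem E rfl i
    · rw [hq]
      refine (stdize_lt_iff _ _ i j).trans ?_
      simp only [Finset.coe_orderIsoOfFin_apply]
  · rintro ⟨f, hrange, hpat⟩
    have hcard : E.card = k := by
      have hE : E = Finset.univ.image (fun i => f i) := by
        ext x
        simp [hrange x, eq_comm]
      rw [hE, Finset.card_image_of_injective _ f.injective, Finset.card_univ, Fintype.card_fin]
    subst hcard
    have hfeq : ∀ i, (E.orderEmbOfFin rfl) i = f i := by
      have := Finset.orderEmbOfFin_unique' (s := E) (k := E.card) rfl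
        (f := f) (fun x => (hrange (f x)).mpr ⟨x, rfl⟩)
      intro i; rw [this]
    unfold IsEmb patternOf
    refine Sigma.mk.inj_iff.mpr ⟨rfl, heq_of_eq ?_⟩
    apply perm_rigid
    intro i j
    refine (stdize_lt_iff _ _ i j).trans ?_
    simp only [Finset.coe_orderIsoOfFin_apply, hfeq]
    exact (hpat i j).symm

/-- Value formula for `dsum`. -/
lemma dsum_val {a b : ℕ} (σ : Equiv.Perm (Fin a)) (τ : Equiv.Perm (Fin b)) (x : Fin (a+b)) :
    ((dsum σ τ) x).val =
      if h : x.val < a then (σ ⟨x.val, h⟩).val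
      else a + (τ ⟨x.val - a, by omega⟩).val := by
  by_cases h : x.val < a
  · have h2 : finSumFinEquiv.symm x = Sum.inl ⟨x.val, h⟩ := by
      rw [Equiv.symm_apply_eq, finSumFinEquiv_apply_left]
      exact Fin.ext rfl
    rw [dif_pos h]
    unfold dsum
    simp [h2]
  · have h2 : finSumFinEquiv.symm x = Sum.inr ⟨x.val - a, by omega⟩ := by
      rw [Equiv.symm_apply_eq, finSumFinEquiv_apply_right]
      exact Fin.ext (by simp [Fin.natAdd]; omega)
    rw [dif_neg h]
    unfold dsum
    simp [h2]

/-- Value formula for `dpow`. -/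
lemma dpow_apply {l : ℕ} (lam : Equiv.Perm (Fin l)) (hl0 : 0 < l) (n : ℕ) (j : Fin (n*l)) :
    ((dpow lam n) j).val = (j.val / l) * l + (lam ⟨j.val % l, Nat.mod_lt _ hl0⟩).val := by
  induction n with
  | zero => exact absurd j.isLt (by simp)
  | succ n ih =>
    have hnl : (n+1)*l = n*l + l := by ring
    have key : ((dpow lam (n+1)) j).val
        = ((dsum (dpow lam n) lam) (⟨j.val, by omega⟩ : Fin (n*l + l))).val := rfl
    rw [key, dsum_val]
    by_cases h : j.val < n * l
    · rw [dif_pos h]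
      exact ih ⟨j.val, h⟩
    · rw [dif_neg h]
      have h1 : j.val < (n+1) * l := j.isLt
      have hdiv : j.val / l = n := Nat.div_eq_of_lt_le (by omega) (by
        have : (n+1)*l = n*l + l := by ring
        omega)
      have hmod : j.val % l = j.val - n*l := by
        have h2 := Nat.div_add_mod j.val l
        rw [hdiv] at h2
        have h3 : l * n = n * l := Nat.mul_comm l n
        omega
      rw [hdiv]
      congr 1
      apply congrArg
      apply congrArg
      apply Fin.ext
      simp only [Fin.val_mk]
      omega

end Aux

section Aux2

lemma sigma_perm_eq {k k' : ℕ} (h : k = k') (p : Equiv.Perm (Fin k)) (q : Equiv.Perm (Fin k'))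
    (hpq : ∀ i : Fin k, (p i).val = (q (Fin.cast h i)).val) :
    (⟨k, p⟩ : PermPat) = ⟨k', q⟩ := by
  subst h
  have : p = q := Equiv.ext (fun i => Fin.ext (by simpa using hpq i))
  rw [this]

lemma card_filter_ge {l : ℕ} (a : ℕ) (hal : a ≤ l) :
    ((Finset.univ : Finset (Fin l)).filter (fun s => a ≤ s.val)).card = l - a := by
  have himg : (Finset.univ : Finset (Fin l)).filter (fun s => a ≤ s.val)
      = (Finset.univ : Finset (Fin (l - a))).image
          (fun t => (⟨a + t.val, by omega⟩ : Fin l)) := by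
    ext s
    simp only [Finset.mem_filter, Finset.mem_univ, true_and, Finset.mem_image]
    constructor
    · intro hs
      exact ⟨⟨s.val - a, by omega⟩, Fin.ext (by simp; omega)⟩
    · rintro ⟨t, rfl⟩
      simp
  rw [himg, Finset.card_image_of_injective _ (fun x y hxy => Fin.ext (by
      have := congrArg Fin.val hxy
      simp only [Fin.val_mk] at this
      omega)), Finset.card_univ, Fintype.card_fin]

/-- If `λ` splits at position `a` (all letters before position `a` smaller than all letters
from position `a` on), then `λ` is decomposable. -/
lemma decomp_of_split {l : ℕ} (lam : Equiv.Perm (Fin l)) {a : ℕ} (ha : 0 < a) (hal : a < l)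
    (hsplit : ∀ r s : Fin l, r.val < a → a ≤ s.val → lam r < lam s) :
    ¬ Indecomp ⟨l, lam⟩ := by
  intro hind
  apply hind.2
  have hlow : ∀ r : Fin l, r.val < a → (lam r).val < a := by
    intro r hr
    by_contra hge
    push_neg at hge
    have hT : ((Finset.univ : Finset (Fin l)).filter (fun s => a ≤ s.val)).image lam
        ⊆ (Finset.univ : Finset (Fin l)).filter (fun s => (lam r).val + 1 ≤ s.val) := by
      intro x hx
      obtain ⟨s, hs, rfl⟩ := Finset.mem_image.mp hx
      rw [Finset.mem_filter] at hs ⊢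
      have := hsplit r s hr hs.2
      rw [Fin.lt_def] at this
      exact ⟨Finset.mem_univ _, by omega⟩
    have hc1 := Finset.card_le_card hT
    rw [Finset.card_image_of_injective _ lam.injective, card_filter_ge a (le_of_lt hal),
      card_filter_ge ((lam r).val + 1) (lam r).isLt] at hc1
    have := (lam r).isLt
    omega
  have hhigh : ∀ s : Fin l, a ≤ s.val → a ≤ (lam s).val := by
    intro s hs
    by_contra hlt
    push_neg at hlt
    -- σ0 is a bijection of Fin a
    have hσinj : Function.Injective (fun r : Fin a =>
        (⟨(lam ⟨r.val, lt_trans r.isLt hal⟩).val, hlow _ r.isLt⟩ : Fin a)) := by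
      intro x y hxy
      have := congrArg Fin.val hxy
      simp only [Fin.val_mk] at this
      have := lam.injective (Fin.ext this)
      have := congrArg Fin.val this
      simp only [Fin.val_mk] at this
      exact Fin.ext this
    have hσbij := (Finite.injective_iff_bijective).mp hσinj
    obtain ⟨r, hr⟩ := hσbij.2 ⟨(lam s).val, hlt⟩
    have := congrArg Fin.val hr
    simp only [Fin.val_mk] at this
    have heq := lam.injective (Fin.ext this)
    have := congrArg Fin.val heq
    simp only [Fin.val_mk] at this
    omega
  -- build the two permutations
  have hσinj : Function.Injective (fun r : Fin a =>
      (⟨(lam ⟨r.val, lt_trans r.isLt hal⟩).val, hlow _ r.isLt⟩ : Fin a)) := by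
    intro x y hxy
    have := congrArg Fin.val hxy
    simp only [Fin.val_mk] at this
    have := lam.injective (Fin.ext this)
    have := congrArg Fin.val this
    simp only [Fin.val_mk] at this
    exact Fin.ext this
  have hτinj : Function.Injective (fun t : Fin (l - a) =>
      (⟨(lam ⟨a + t.val, by omega⟩).val - a, by
        have h1 := (lam ⟨a + t.val, by omega⟩).isLt
        have h2 := hhigh ⟨a + t.val, by omega⟩ (by simp)
        omega⟩ : Fin (l - a))) := by
    intro x y hxy
    have hv := congrArg Fin.val hxy
    simp only [Fin.val_mk] at hv
    have h2x := hhigh ⟨a + x.val, by omega⟩ (by simp)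
    have h2y := hhigh ⟨a + y.val, by omega⟩ (by simp)
    have : (lam ⟨a + x.val, by omega⟩).val = (lam ⟨a + y.val, by omega⟩).val := by omega
    have := lam.injective (Fin.ext this)
    have := congrArg Fin.val this
    simp only [Fin.val_mk] at this
    exact Fin.ext (by omega)
  refine ⟨a, l - a, Equiv.ofBijective _ ((Finite.injective_iff_bijective).mp hσinj),
    Equiv.ofBijective _ ((Finite.injective_iff_bijective).mp hτinj), ha, by omega, ?_⟩
  apply sigma_perm_eq (by omega)
  intro i
  rw [dsum_val]
  by_cases hia : i.val < a
  · rw [dif_pos (show (Fin.cast (by omega : l = a + (l-a)) i).val < a from hia)]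
    rfl
  · rw [dif_neg (show ¬ (Fin.cast (by omega : l = a + (l-a)) i).val < a from hia)]
    simp only [Equiv.ofBijective_apply, Fin.val_mk]
    have h2 := hhigh i (by omega)
    have key : ∀ w : Fin l, w = i → (lam i).val = a + ((lam w).val - a) := by
      rintro w rfl
      omega
    exact key _ (Fin.ext (by simp only [Fin.val_mk, Fin.coe_cast]; omega))

end Aux2

section Aux3

lemma div_pred_eq {l x : ℕ} (hl0 : 0 < l) (hx : x % l ≠ 0) : (x - 1) / l = x / l := by
  have h1 := Nat.div_add_mod x l
  have h2 : l * (x / l) = (x / l) * l := Nat.mul_comm _ _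
  have h3 : x % l < l := Nat.mod_lt _ hl0
  have h4 : x - 1 = (x % l - 1) + (x / l) * l := by omega
  rw [h4, Nat.add_mul_div_right _ _ hl0, Nat.div_eq_of_lt (by omega), Nat.zero_add]

/-- Positions linked to their predecessor in `λ^n` are never at the start of a copy of `λ`. -/
lemma linked_mod {l n : ℕ} (lam : Equiv.Perm (Fin l)) (hl : 1 < l)
    (hind : Indecomp ⟨l, lam⟩) {j : Fin (n*l)} (hlink : Linked (dpow lam n) j) :
    j.val % l ≠ 0 := by
  intro hmod0
  have hl0 : 0 < l := by omega
  obtain ⟨hpos, hcons⟩ := hlink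
  obtain ⟨c, hc⟩ : ∃ c, j.val / l = c := ⟨_, rfl⟩
  have hcl : j.val = c * l := by
    have h1 := Nat.div_add_mod j.val l
    have h2 : l * (j.val / l) = c * l := by rw [hc]; exact Nat.mul_comm _ _
    omega
  have hc1 : 0 < c := by
    rcases Nat.eq_zero_or_pos c with h0 | h0
    · rw [h0, Nat.zero_mul] at hcl
      omega
    · exact h0
  have hcc : (c-1)*l + l = c*l := by
    have : (c-1+1) * l = (c-1)*l + l := Nat.succ_mul _ _
    rw [← this, Nat.sub_add_cancel hc1]
  -- value at j
  have hπj : ((dpow lam n) j).val = c * l + (lam ⟨0, hl0⟩).val := by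
    rw [dpow_apply lam hl0 n j]
    have key : ∀ w : Fin l, w = ⟨0, hl0⟩ →
        (j.val / l) * l + (lam w).val = c * l + (lam ⟨0, hl0⟩).val := by
      rintro w rfl
      rw [hc]
    exact key _ (Fin.ext hmod0)
  -- value at prevPos j
  have hprevval : (prevPos j).val = j.val - 1 := rfl
  have hdivp : (prevPos j).val / l = c - 1 := by
    rw [hprevval]
    have h4 : j.val - 1 = (l - 1) + (c - 1) * l := by omega
    rw [h4, Nat.add_mul_div_right _ _ hl0, Nat.div_eq_of_lt (by omega), Nat.zero_add]
  have hmodp : (prevPos j).val % l = l - 1 := by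
    rw [hprevval]
    have h4 : j.val - 1 = (l - 1) + (c - 1) * l := by omega
    rw [h4, Nat.add_mul_mod_self_right, Nat.mod_eq_of_lt (by omega)]
  have hπp : ((dpow lam n) (prevPos j)).val = (c-1) * l + (lam ⟨l-1, by omega⟩).val := by
    rw [dpow_apply lam hl0 n (prevPos j), hdivp]
    have key : ∀ w : Fin l, w = ⟨l-1, by omega⟩ →
        (c-1) * l + (lam w).val = (c-1) * l + (lam ⟨l-1, by omega⟩).val := by
      rintro w rfl
      rfl
    exact key _ (Fin.ext hmodp)
  rw [hπj, hπp] at hcons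
  have hA : (lam ⟨0, hl0⟩).val < l := (lam _).isLt
  have hB : (lam ⟨l-1, by omega⟩).val < l := (lam _).isLt
  have hA0 : (lam ⟨0, hl0⟩).val = 0 := by omega
  -- λ starts with its smallest letter, hence is decomposable
  apply decomp_of_split lam (a := 1) Nat.one_pos hl ?_ hind
  intro r s hr hs
  have hr0 : r = ⟨0, hl0⟩ := Fin.ext (by simp only [Fin.val_mk]; omega)
  rw [hr0, Fin.lt_def, hA0]
  have hne : lam s ≠ lam ⟨0, hl0⟩ := fun he => by
    have := lam.injective he
    have := congrArg Fin.val this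
    simp only [Fin.val_mk] at this
    omega
  have : (lam s).val ≠ 0 := fun h0 => hne (Fin.ext (by omega))
  omega

/-- Positions in the same adjacency of `λ^n` lie in the same copy of `λ`. -/
lemma blockIdx_eq_copy {l n : ℕ} (lam : Equiv.Perm (Fin l)) (hl : 1 < l)
    (hind : Indecomp ⟨l, lam⟩) {i j : Fin (n*l)} (hij : i ≤ j)
    (hb : blockIdx (dpow lam n) i = blockIdx (dpow lam n) j) :
    i.val / l = j.val / l := by
  have hl0 : 0 < l := by omega
  have hpos0 : (0 : ℕ) < n * l := lt_of_le_of_lt (Nat.zero_le _) i.isLt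
  have hmem0 : ∀ x : Fin (n*l), (⟨0, hpos0⟩ : Fin (n*l)) ∈
      Finset.univ.filter (fun m => ¬ Linked (dpow lam n) m ∧ m ≤ x) := by
    intro x
    rw [Finset.mem_filter]
    exact ⟨Finset.mem_univ _, fun hL => by exact absurd hL.1 (by simp), by
      rw [Fin.le_def]; exact Nat.zero_le _⟩
  have hN1 : ∀ x : Fin (n*l),
      1 ≤ (Finset.univ.filter (fun m => ¬ Linked (dpow lam n) m ∧ m ≤ x)).card :=
    fun x => Finset.card_pos.mpr ⟨_, hmem0 x⟩
  have hNeq : (Finset.univ.filter (fun m => ¬ Linked (dpow lam n) m ∧ m ≤ i)).card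
      = (Finset.univ.filter (fun m => ¬ Linked (dpow lam n) m ∧ m ≤ j)).card := by
    have hb' : (Finset.univ.filter (fun m => ¬ Linked (dpow lam n) m ∧ m ≤ i)).card - 1
        = (Finset.univ.filter (fun m => ¬ Linked (dpow lam n) m ∧ m ≤ j)).card - 1 := hb
    have h1 := hN1 i
    have h2 := hN1 j
    omega
  have hLink : ∀ k : Fin (n*l), i < k → k ≤ j → Linked (dpow lam n) k := by
    intro k hik hkj
    by_contra hnl
    have hss : Finset.univ.filter (fun m => ¬ Linked (dpow lam n) m ∧ m ≤ i)
        ⊂ Finset.univ.filter (fun m => ¬ Linked (dpow lam n) m ∧ m ≤ j) := by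
      rw [Finset.ssubset_iff_of_subset (fun x hx => by
        rw [Finset.mem_filter] at hx ⊢
        exact ⟨hx.1, hx.2.1, le_trans hx.2.2 hij⟩)]
      exact ⟨k, by rw [Finset.mem_filter]; exact ⟨Finset.mem_univ _, hnl, hkj⟩,
        fun hk => by
          rw [Finset.mem_filter] at hk
          exact absurd hk.2.2 (not_le_of_gt hik)⟩
    have := Finset.card_lt_card hss
    omega
  have main : ∀ d : ℕ, ∀ k : Fin (n*l), i ≤ k → k ≤ j → k.val = i.val + d →
      i.val / l = k.val / l := by
    intro d
    induction d with
    | zero =>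
      intro k _ _ hk
      have : i = k := Fin.ext (by omega)
      rw [this]
    | succ d ih =>
      intro k hik hkj hk
      have hkpos : 0 < k.val := by omega
      have h1 : i ≤ (⟨k.val - 1, by omega⟩ : Fin (n*l)) := by
        rw [Fin.le_def]; simp only [Fin.val_mk]; omega
      have h2 : (⟨k.val - 1, by omega⟩ : Fin (n*l)) ≤ j :=
        le_trans (by rw [Fin.le_def]; simp only [Fin.val_mk]; omega) hkj
      have h3 := ih ⟨k.val - 1, by omega⟩ h1 h2 (by simp only [Fin.val_mk]; omega)
      have hlk : Linked (dpow lam n) k := hLink k (by rw [Fin.lt_def]; omega) hkj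
      have hmodk : k.val % l ≠ 0 := linked_mod lam hl hind hlk
      have := div_pred_eq hl0 hmodk
      simp only [Fin.val_mk] at h3
      omega
  exact main (j.val - i.val) j hij (le_refl _) (by omega)

end Aux3

section Aux4

lemma pos_bound {n l c r : ℕ} (hc : c < n) (hr : r < l) : c*l + r < n*l := by
  have h1 : (c+1)*l = c*l + l := Nat.succ_mul _ _
  have h2 : (c+1)*l ≤ n*l := Nat.mul_le_mul_right l hc
  omega

lemma cl_div {c r l : ℕ} (hl0 : 0 < l) (hr : r < l) : (c*l + r)/l = c := by
  rw [Nat.add_comm, Nat.add_mul_div_right _ _ hl0, Nat.div_eq_of_lt hr, Nat.zero_add]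

lemma cl_mod {c r l : ℕ} (hr : r < l) : (c*l + r) % l = r := by
  rw [Nat.add_comm, Nat.add_mul_mod_self_right, Nat.mod_eq_of_lt hr]

lemma block_lt_block {a b x y l : ℕ} (hx : x < l) (hab : a < b) : a*l + x < b*l + y := by
  have h1 : (a+1)*l ≤ b*l := Nat.mul_le_mul_right l hab
  have h2 : (a+1)*l = a*l + l := Nat.succ_mul _ _
  omega

lemma block_lt_iff {a b x y l : ℕ} (hx : x < l) (hy : y < l) :
    a*l + x < b*l + y ↔ (a < b ∨ (a = b ∧ x < y)) := by
  constructor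
  · intro h
    rcases lt_trichotomy a b with h' | h' | h'
    · exact Or.inl h'
    · subst h'
      exact Or.inr ⟨rfl, by omega⟩
    · have h2 : b*l + y < a*l + x := block_lt_block hy h'
      omega
  · rintro (h' | ⟨rfl, h'⟩)
    · exact block_lt_block hx h'
    · omega

/-- The index of the copy of `λ` containing position `j` of `λ^n`. -/
def copyFin {l n : ℕ} (hl0 : 0 < l) (j : Fin (n*l)) : Fin n :=
  ⟨j.val / l, (Nat.div_lt_iff_lt_mul hl0).mpr j.isLt⟩

/-- The union of the copies of `λ` indexed by `T`. -/
noncomputable def copiesF {l n : ℕ} (hl0 : 0 < l) (T : Finset (Fin n)) : Finset (Fin (n*l)) :=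
  Finset.univ.filter (fun j => copyFin hl0 j ∈ T)

lemma mem_copiesF {l n : ℕ} (hl0 : 0 < l) (T : Finset (Fin n)) (j : Fin (n*l)) :
    j ∈ copiesF hl0 T ↔ copyFin hl0 j ∈ T := by
  simp [copiesF]

/-- Position `r` within copy `p`. -/
def posIn {m l : ℕ} (p : Fin m) (r : Fin l) : Fin (m*l) :=
  ⟨p.val * l + r.val, pos_bound p.isLt r.isLt⟩

lemma posIn_div {m l : ℕ} (hl0 : 0 < l) (p : Fin m) (r : Fin l) :
    (posIn p r).val / l = p.val := cl_div hl0 r.isLt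

lemma posIn_mod {m l : ℕ} (p : Fin m) (r : Fin l) :
    (posIn p r).val % l = r.val := cl_mod r.isLt

lemma copyFin_posIn {m l : ℕ} (hl0 : 0 < l) (p : Fin m) (r : Fin l) :
    copyFin hl0 (posIn p r) = p := Fin.ext (posIn_div hl0 p r)

lemma card_copiesF {l n : ℕ} (hl0 : 0 < l) (T : Finset (Fin n)) :
    (copiesF hl0 T).card = T.card * l := by
  rw [show T.card * l = (T ×ˢ (Finset.univ : Finset (Fin l))).card by
    rw [Finset.card_product, Finset.card_univ, Fintype.card_fin]]
  apply Finset.card_bij' (fun j _ => (copyFin hl0 j, (⟨j.val % l, Nat.mod_lt _ hl0⟩ : Fin l)))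
    (fun p _ => posIn p.1 p.2)
  · intro a ha
    rw [Finset.mem_product]
    exact ⟨(mem_copiesF hl0 T a).mp ha, Finset.mem_univ _⟩
  · intro p hp
    rw [mem_copiesF, copyFin_posIn]
    exact (Finset.mem_product.mp hp).1
  · intro a _
    apply Fin.ext
    show (copyFin hl0 a).val * l + a.val % l = a.val
    show (a.val / l) * l + a.val % l = a.val
    have h1 := Nat.div_add_mod a.val l
    have h2 : l * (a.val / l) = (a.val / l) * l := Nat.mul_comm _ _
    omega
  · intro p _
    apply Prod.ext
    · exact copyFin_posIn hl0 p.1 p.2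
    · exact Fin.ext (posIn_mod p.1 p.2)

lemma copiesF_injective {l n : ℕ} (hl0 : 0 < l) {T T' : Finset (Fin n)}
    (h : copiesF hl0 T = copiesF hl0 T') : T = T' := by
  ext c
  have h1 : ∀ T₀ : Finset (Fin n), posIn c (⟨0, hl0⟩ : Fin l) ∈ copiesF hl0 T₀ ↔ c ∈ T₀ := by
    intro T₀
    rw [mem_copiesF, copyFin_posIn]
  rw [← h1 T, ← h1 T', h]

lemma down_closed_iff {l : ℕ} (S : Finset (Fin l))
    (hdc : ∀ r r' : Fin l, r ≤ r' → r' ∈ S → r ∈ S) (r : Fin l) :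
    r ∈ S ↔ r.val < S.card := by
  constructor
  · intro hr
    have hsub : Finset.Iic r ⊆ S := fun x hx => hdc x r (Finset.mem_Iic.mp hx) hr
    have := Finset.card_le_card hsub
    rw [Fin.card_Iic] at this
    omega
  · intro hr
    by_contra hns
    have hsub : S ⊆ Finset.Iio r := fun x hx => Finset.mem_Iio.mpr (by
      rcases lt_or_ge x r with h' | h'
      · exact h'
      · exact absurd (hdc r x h' hx) hns)
    have := Finset.card_le_card hsub
    rw [Fin.card_Iio] at this
    omega

end Aux4

section Aux5

/-- A union of `m` copies of `λ` in `λ^n` is an embedding of `λ^m`. -/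
lemma isEmb_copies {l : ℕ} (lam : Equiv.Perm (Fin l)) (hl0 : 0 < l) {m n : ℕ}
    (T : Finset (Fin n)) (hT : T.card = m) :
    IsEmb ⟨m*l, dpow lam m⟩ (dpow lam n) (copiesF hl0 T) := by
  rw [isEmb_iff]
  have hg := (T.orderEmbOfFin hT).strictMono
  set g := T.orderEmbOfFin hT with hgdef
  -- the underlying map
  set f0 : Fin (m*l) → Fin (n*l) := fun i =>
    ⟨(g (copyFin hl0 i)).val * l + i.val % l,
      pos_bound (g (copyFin hl0 i)).isLt (Nat.mod_lt _ hl0)⟩ with hf0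
  have fval : ∀ i : Fin (m*l), (f0 i).val = (g (copyFin hl0 i)).val * l + i.val % l :=
    fun i => rfl
  have fdiv : ∀ i : Fin (m*l), (f0 i).val / l = (g (copyFin hl0 i)).val := by
    intro i
    rw [fval, cl_div hl0 (Nat.mod_lt _ hl0)]
  have fmod : ∀ i : Fin (m*l), (f0 i).val % l = i.val % l := by
    intro i
    rw [fval, cl_mod (Nat.mod_lt _ hl0)]
  -- strict monotonicity
  have hmono : StrictMono f0 := by
    intro i j hij
    rw [Fin.lt_def] at hij
    have hdle : i.val / l ≤ j.val / l := Nat.div_le_div_right (le_of_lt hij)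
    rcases eq_or_lt_of_le hdle with heq | hlt
    · have hci : copyFin hl0 i = copyFin hl0 j := Fin.ext heq
      rw [Fin.lt_def, fval, fval, hci]
      apply Nat.add_lt_add_left
      have e1 := Nat.div_add_mod i.val l
      have e2 := Nat.div_add_mod j.val l
      have e3 : l * (i.val / l) = l * (j.val / l) := by rw [heq]
      omega
    · have hc : copyFin hl0 i < copyFin hl0 j := by
        rw [Fin.lt_def]
        exact hlt
      have := hg hc
      rw [Fin.lt_def] at this
      rw [Fin.lt_def, fval, fval]
      exact block_lt_block (Nat.mod_lt _ hl0) this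
  refine ⟨OrderEmbedding.ofStrictMono f0 hmono, ?_, ?_⟩
  · intro x
    constructor
    · intro hx
      rw [mem_copiesF] at hx
      have hx2 : copyFin hl0 x ∈ Set.range g := by
        rw [hgdef, Finset.range_orderEmbOfFin]
        exact hx
      obtain ⟨p, hp⟩ := hx2
      refine ⟨posIn p ⟨x.val % l, Nat.mod_lt _ hl0⟩, ?_⟩
      apply Fin.ext
      show (g (copyFin hl0 (posIn p ⟨x.val % l, Nat.mod_lt _ hl0⟩))).val * l
          + (posIn p ⟨x.val % l, Nat.mod_lt _ hl0⟩).val % l = x.val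
      rw [copyFin_posIn, posIn_mod, hp]
      show (x.val / l) * l + x.val % l = x.val
      have h1 := Nat.div_add_mod x.val l
      have h2 : l * (x.val / l) = (x.val / l) * l := Nat.mul_comm _ _
      omega
    · rintro ⟨i, rfl⟩
      rw [mem_copiesF]
      have : copyFin hl0 (f0 i) = g (copyFin hl0 i) := Fin.ext (fdiv i)
      rw [show copyFin hl0 ((OrderEmbedding.ofStrictMono f0 hmono) i) = g (copyFin hl0 i)
        from this]
      exact Finset.orderEmbOfFin_mem T hT _
  · intro i j
    have hvn : ∀ i : Fin (m*l), ((dpow lam n) (f0 i)).val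
        = (g (copyFin hl0 i)).val * l + (lam ⟨i.val % l, Nat.mod_lt _ hl0⟩).val := by
      intro i
      rw [dpow_apply lam hl0 n (f0 i), fdiv]
      have key : ∀ w : Fin l, w = ⟨i.val % l, Nat.mod_lt _ hl0⟩ →
          (g (copyFin hl0 i)).val * l + (lam w).val
          = (g (copyFin hl0 i)).val * l + (lam ⟨i.val % l, Nat.mod_lt _ hl0⟩).val := by
        rintro w rfl
        rfl
      exact key _ (Fin.ext (fmod i))
    rw [Fin.lt_def, Fin.lt_def, dpow_apply lam hl0 m i, dpow_apply lam hl0 m j]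
    rw [show ((dpow lam n) ((OrderEmbedding.ofStrictMono f0 hmono) i)).val
      = (g (copyFin hl0 i)).val * l + (lam ⟨i.val % l, Nat.mod_lt _ hl0⟩).val from hvn i]
    rw [show ((dpow lam n) ((OrderEmbedding.ofStrictMono f0 hmono) j)).val
      = (g (copyFin hl0 j)).val * l + (lam ⟨j.val % l, Nat.mod_lt _ hl0⟩).val from hvn j]
    rw [block_lt_iff (lam _).isLt (lam _).isLt, block_lt_iff (lam _).isLt (lam _).isLt]
    have hlt_iff : i.val / l < j.val / l ↔ (g (copyFin hl0 i)).val < (g (copyFin hl0 j)).val := by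
      constructor
      · intro h
        have : copyFin hl0 i < copyFin hl0 j := by rw [Fin.lt_def]; exact h
        have := hg this
        rw [Fin.lt_def] at this
        exact this
      · intro h
        by_contra hn
        push_neg at hn
        rcases eq_or_lt_of_le hn with heq | hlt
        · have : copyFin hl0 j = copyFin hl0 i := Fin.ext heq
          rw [this] at h
          omega
        · have : copyFin hl0 j < copyFin hl0 i := by rw [Fin.lt_def]; exact hlt
          have := hg this
          rw [Fin.lt_def] at this
          omega
    have heq_iff : i.val / l = j.val / l ↔ (g (copyFin hl0 i)).val = (g (copyFin hl0 j)).val := by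
      constructor
      · intro h
        rw [show copyFin hl0 i = copyFin hl0 j from Fin.ext h]
      · intro h
        have := hg.injective (Fin.ext h : g (copyFin hl0 i) = g (copyFin hl0 j))
        exact congrArg Fin.val this
    constructor
    · rintro (h | ⟨h1, h2⟩)
      · exact Or.inl (hlt_iff.mp h)
      · exact Or.inr ⟨heq_iff.mp h1, h2⟩
    · rintro (h | ⟨h1, h2⟩)
      · exact Or.inl (hlt_iff.mpr h)
      · exact Or.inr ⟨heq_iff.mpr h1, h2⟩

end Aux5

section Aux6

/-- Every embedding of `λ^m` in `λ^n` is a union of `m` full copies of `λ`. -/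
lemma isEmb_structure {l : ℕ} (lam : Equiv.Perm (Fin l)) (hl : 1 < l) (hl0 : 0 < l)
    (hind : Indecomp ⟨l, lam⟩) {m n : ℕ} {E : Finset (Fin (n*l))}
    (hE : IsEmb ⟨m*l, dpow lam m⟩ (dpow lam n) E) :
    ∃ T : Finset (Fin n), T.card = m ∧ E = copiesF hl0 T := by
  rw [isEmb_iff] at hE
  obtain ⟨f, hrange, hpat⟩ := hE
  -- value of dpow lam m at a position
  have hvm : ∀ (p : Fin m) (r : Fin l), ((dpow lam m) (posIn p r)).val
      = p.val * l + (lam r).val := by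
    intro p r
    rw [dpow_apply lam hl0 m (posIn p r), posIn_div hl0]
    have key : ∀ w : Fin l, w = r →
        p.val * l + (lam w).val = p.val * l + (lam r).val := by
      rintro w rfl
      rfl
    exact key _ (Fin.ext (posIn_mod p r))
  -- Step 1: each copy of λ^m is mapped inside a single copy of λ in λ^n
  have step1 : ∀ (p : Fin m) (r : Fin l),
      (f (posIn p r)).val / l = (f (posIn p ⟨0, hl0⟩)).val / l := by
    intro p
    set F : Fin l → ℕ := fun r => (f (posIn p r)).val / l with hF
    have hFmono : ∀ r r' : Fin l, r ≤ r' → F r ≤ F r' := by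
      intro r r' hrr
      apply Nat.div_le_div_right
      have : posIn p r ≤ posIn p r' := by
        rw [Fin.le_def]
        show p.val * l + r.val ≤ p.val * l + r'.val
        rw [Fin.le_def] at hrr
        omega
      exact f.le_iff_le.mpr this
    have hF0 : ∀ r : Fin l, F ⟨0, hl0⟩ ≤ F r := by
      intro r
      exact hFmono _ _ (by rw [Fin.le_def]; exact Nat.zero_le _)
    set S : Finset (Fin l) := Finset.univ.filter (fun r => F r = F ⟨0, hl0⟩) with hS
    have hdc : ∀ r r' : Fin l, r ≤ r' → r' ∈ S → r ∈ S := by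
      intro r r' hrr hr'
      rw [hS, Finset.mem_filter] at hr' ⊢
      refine ⟨Finset.mem_univ _, ?_⟩
      have h1 := hFmono r r' hrr
      have h2 := hF0 r
      omega
    have hmemS := down_closed_iff S hdc
    have h0S : (⟨0, hl0⟩ : Fin l) ∈ S := by
      rw [hS, Finset.mem_filter]
      exact ⟨Finset.mem_univ _, rfl⟩
    have hSpos : 0 < S.card := Finset.card_pos.mpr ⟨_, h0S⟩
    have hScard : S.card = l := by
      by_contra hne
      have hSl : S.card < l := by
        have := Finset.card_le_card (Finset.subset_univ S)
        rw [Finset.card_univ, Fintype.card_fin] at this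
        omega
      -- λ splits at a := S.card, contradiction
      exact absurd hind (decomp_of_split lam hSpos hSl (by
        intro r s hr hs
        have hrS : r ∈ S := (hmemS r).mpr hr
        have hsS : s ∉ S := fun hmem => by
          have := (hmemS s).mp hmem
          omega
        rw [hS, Finset.mem_filter] at hrS hsS
        have hFr : F r = F ⟨0, hl0⟩ := hrS.2
        have hFs : F ⟨0, hl0⟩ < F s := by
          have h1 := hF0 s
          rcases eq_or_lt_of_le h1 with he | hlt
          · exact absurd ⟨Finset.mem_univ _, he.symm⟩ hsS
          · exact hlt
        -- values in λ^n compare by copy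
        have hvlt : (dpow lam n) (f (posIn p r)) < (dpow lam n) (f (posIn p s)) := by
          rw [Fin.lt_def, dpow_apply lam hl0 n (f (posIn p r)),
            dpow_apply lam hl0 n (f (posIn p s))]
          exact block_lt_block (lam _).isLt (show F r < F s by omega)
        have := (hpat (posIn p r) (posIn p s)).mpr hvlt
        rw [Fin.lt_def, hvm p r, hvm p s] at this
        rw [Fin.lt_def]
        omega))
    intro r
    have : r ∈ S := (hmemS r).mpr (by rw [hScard]; exact r.isLt)
    rw [hS, Finset.mem_filter] at this
    exact this.2
  -- the copy map
  set cmap : Fin m → Fin n := fun p => copyFin hl0 (f (posIn p ⟨0, hl0⟩)) with hcmap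
  have hcopyall : ∀ (p : Fin m) (r : Fin l), copyFin hl0 (f (posIn p r)) = cmap p := by
    intro p r
    exact Fin.ext (step1 p r)
  -- cmap is strictly monotone
  have hcmono : StrictMono cmap := by
    intro p p' hpp
    have hle : cmap p ≤ cmap p' := by
      rw [Fin.le_def]
      show (f (posIn p ⟨0, hl0⟩)).val / l ≤ (f (posIn p' ⟨0, hl0⟩)).val / l
      apply Nat.div_le_div_right
      have : posIn p ⟨0, hl0⟩ ≤ posIn p' ⟨0, hl0⟩ := by
        rw [Fin.le_def]
        show p.val * l + 0 ≤ p'.val * l + 0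
        have : p.val * l ≤ p'.val * l := Nat.mul_le_mul_right l (le_of_lt hpp)
        omega
      exact f.le_iff_le.mpr this
    rcases eq_or_lt_of_le hle with heq | hlt
    · exfalso
      -- l+1 distinct positions in a single copy of λ, impossible
      set u : Fin (l+1) → Fin (n*l) := fun t =>
        if h : t.val < l then f (posIn p ⟨t.val, h⟩) else f (posIn p' ⟨0, hl0⟩) with hu
      have huinj : Function.Injective u := by
        intro t t' htt
        rw [hu] at htt
        simp only at htt
        by_cases h1 : t.val < l <;> by_cases h2 : t'.val < l
        · rw [dif_pos h1, dif_pos h2] at htt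
          have := f.injective htt
          have := congrArg Fin.val this
          rw [show (posIn p ⟨t.val, h1⟩).val = p.val * l + t.val from rfl,
            show (posIn p ⟨t'.val, h2⟩).val = p.val * l + t'.val from rfl] at this
          exact Fin.ext (by omega)
        · rw [dif_pos h1, dif_neg h2] at htt
          have := f.injective htt
          have := congrArg Fin.val this
          rw [show (posIn p ⟨t.val, h1⟩).val = p.val * l + t.val from rfl,
            show (posIn p' ⟨0, hl0⟩).val = p'.val * l + 0 from rfl] at this
          have hpl : p.val * l + l ≤ p'.val * l := by
            have h3 : (p.val+1)*l ≤ p'.val * l := Nat.mul_le_mul_right l hpp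
            have h4 : (p.val+1)*l = p.val*l + l := Nat.succ_mul _ _
            omega
          omega
        · rw [dif_neg h1, dif_pos h2] at htt
          have := f.injective htt
          have := congrArg Fin.val this
          rw [show (posIn p ⟨t'.val, h2⟩).val = p.val * l + t'.val from rfl,
            show (posIn p' ⟨0, hl0⟩).val = p'.val * l + 0 from rfl] at this
          have hpl : p.val * l + l ≤ p'.val * l := by
            have h3 : (p.val+1)*l ≤ p'.val * l := Nat.mul_le_mul_right l hpp
            have h4 : (p.val+1)*l = p.val*l + l := Nat.succ_mul _ _
            omega
          omega
        · exact Fin.ext (by omega)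
      have hcard : ((Finset.univ : Finset (Fin (l+1))).image u).card = l + 1 := by
        rw [Finset.card_image_of_injective _ huinj, Finset.card_univ, Fintype.card_fin]
      have hsub : (Finset.univ : Finset (Fin (l+1))).image u ⊆ copiesF hl0 {cmap p} := by
        intro x hx
        obtain ⟨t, _, rfl⟩ := Finset.mem_image.mp hx
        rw [mem_copiesF, Finset.mem_singleton, hu]
        by_cases h1 : t.val < l
        · simp only [dif_pos h1]
          exact hcopyall p _
        · simp only [dif_neg h1]
          rw [hcopyall p' _]
          exact heq.symm
      have := Finset.card_le_card hsub
      rw [hcard, card_copiesF, Finset.card_singleton, Nat.one_mul] at this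
      omega
    · exact hlt
  -- the set of copies used
  refine ⟨Finset.univ.image cmap, ?_, ?_⟩
  · rw [Finset.card_image_of_injective _ hcmono.injective, Finset.card_univ, Fintype.card_fin]
  · ext x
    rw [mem_copiesF, hrange]
    constructor
    · rintro ⟨i, rfl⟩
      rw [Finset.mem_image]
      refine ⟨copyFin hl0 i, Finset.mem_univ _, ?_⟩
      have hi : i = posIn (copyFin hl0 i) ⟨i.val % l, Nat.mod_lt _ hl0⟩ := by
        apply Fin.ext
        show i.val = (i.val / l) * l + i.val % l
        have h1 := Nat.div_add_mod i.val l
        have h2 : l * (i.val / l) = (i.val / l) * l := Nat.mul_comm _ _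
        omega
      rw [show f i = f (posIn (copyFin hl0 i) ⟨i.val % l, Nat.mod_lt _ hl0⟩) from by rw [← hi]]
      rw [hcopyall]
    · intro hx
      obtain ⟨p, _, hp⟩ := Finset.mem_image.mp hx
      -- the copy `cmap p` is entirely covered by the image of copy `p`
      have himg : (Finset.univ : Finset (Fin l)).image (fun r => f (posIn p r))
          = copiesF hl0 {cmap p} := by
        apply Finset.eq_of_subset_of_card_le
        · intro y hy
          obtain ⟨r, _, rfl⟩ := Finset.mem_image.mp hy
          rw [mem_copiesF, Finset.mem_singleton]
          exact hcopyall p r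
        · rw [card_copiesF, Finset.card_singleton, Nat.one_mul,
            Finset.card_image_of_injective _ (fun r r' hrr => by
              have := f.injective hrr
              have := congrArg Fin.val this
              rw [show (posIn p r).val = p.val * l + r.val from rfl,
                show (posIn p r').val = p.val * l + r'.val from rfl] at this
              exact Fin.ext (by omega)), Finset.card_univ, Fintype.card_fin]
      have hxin : x ∈ copiesF hl0 {cmap p} := by
        rw [mem_copiesF, Finset.mem_singleton, hp]
      rw [← himg] at hxin
      obtain ⟨r, _, hr⟩ := Finset.mem_image.mp hxin
      exact ⟨_, hr⟩

end Aux6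

section P5
open Finset

lemma partial_alt (n : ℕ) (hn : 1 ≤ n) (k : ℕ) :
    ∑ j ∈ range (k+1), (-1:ℤ)^j * (n.choose j) = (-1:ℤ)^k * ((n-1).choose k) := by
  obtain ⟨n, rfl⟩ : ∃ n', n = n' + 1 := ⟨n - 1, by omega⟩
  induction k with
  | zero => simp
  | succ k ih =>
    rw [Finset.sum_range_succ, ih]
    rw [Nat.choose_succ_succ n k]
    simp only [Nat.add_sub_cancel] at *
    push_cast
    ring

/-- Core counting identity: alternating sum over covering families of `m`-subsets of `Fin n`. -/
lemma cover_sum (n m : ℕ) (hm : 1 ≤ m) (hmn : m ≤ n) :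
    ∑ 𝒯 ∈ (Finset.univ : Finset (Finset (Finset (Fin n)))).filter
        (fun 𝒯 => 𝒯.Nonempty ∧ (∀ T ∈ 𝒯, T.card = m) ∧ ∀ c : Fin n, ∃ T ∈ 𝒯, c ∈ T),
      (-1:ℤ)^𝒯.card = (-1:ℤ)^(n-m+1) * ((n-1).choose (m-1) : ℤ) := by
  classical
  have hn : 1 ≤ n := le_trans hm hmn
  set A : Finset (Finset (Fin n)) := univ.filter (fun T => T.card = m) with hA
  -- rewrite domain
  have hdom : (Finset.univ : Finset (Finset (Finset (Fin n)))).filter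
        (fun 𝒯 => 𝒯.Nonempty ∧ (∀ T ∈ 𝒯, T.card = m) ∧ ∀ c : Fin n, ∃ T ∈ 𝒯, c ∈ T)
      = A.powerset.filter (fun 𝒯 => ∀ c : Fin n, ∃ T ∈ 𝒯, c ∈ T) := by
    ext 𝒯
    simp only [mem_filter, mem_powerset, mem_univ, true_and, hA]
    constructor
    · rintro ⟨-, h1, h2⟩
      exact ⟨fun T hT => by simp [h1 T hT], h2⟩
    · rintro ⟨h1, h2⟩
      refine ⟨?_, fun T hT => by simpa using (mem_filter.mp (h1 hT)).2, h2⟩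
      obtain ⟨T, hT, -⟩ := h2 ⟨0, hn⟩
      exact ⟨T, hT⟩
  rw [hdom, sum_filter]
  -- replace cover indicator by alternating sum over subsets of uncovered part
  have step1 : ∀ 𝒯 : Finset (Finset (Fin n)),
      (if (∀ c : Fin n, ∃ T ∈ 𝒯, c ∈ T) then ((-1:ℤ))^𝒯.card else 0)
      = ∑ W ∈ (univ \ 𝒯.sup id).powerset, (-1:ℤ)^W.card * (-1:ℤ)^𝒯.card := by
    intro 𝒯
    rw [← sum_mul, sum_powerset_neg_one_pow_card]
    have : (univ \ 𝒯.sup id = ∅) ↔ (∀ c : Fin n, ∃ T ∈ 𝒯, c ∈ T) := by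
      rw [sdiff_eq_empty_iff_subset]
      constructor
      · intro h c
        have := h (mem_univ c)
        simpa [Finset.mem_sup] using this
      · intro h x _
        obtain ⟨T, hT, hx⟩ := h x
        exact Finset.mem_sup.mpr ⟨T, hT, hx⟩
    by_cases hcov : ∀ c : Fin n, ∃ T ∈ 𝒯, c ∈ T
    · rw [if_pos hcov, if_pos (this.mpr hcov), one_mul]
    · rw [if_neg hcov, if_neg (fun he => hcov (this.mp he)), zero_mul]
  simp_rw [step1]
  -- extend inner sum to all W and swap
  have step2 : ∀ 𝒯 : Finset (Finset (Fin n)),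
      ∑ W ∈ (univ \ 𝒯.sup id).powerset, (-1:ℤ)^W.card * (-1:ℤ)^𝒯.card
      = ∑ W ∈ (univ : Finset (Fin n)).powerset,
          (if ∀ T ∈ 𝒯, Disjoint W T then (-1:ℤ)^W.card * (-1:ℤ)^𝒯.card else 0) := by
    intro 𝒯
    rw [← sum_filter]
    apply Finset.sum_congr _ (fun _ _ => rfl)
    ext W
    simp only [mem_powerset, mem_filter, subset_univ, true_and, Finset.subset_sdiff,
      Finset.disjoint_sup_right]
    tauto
  simp_rw [step2]
  rw [Finset.sum_comm]
  -- inner sum over 𝒯 : subsets of A disjoint from W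
  have step3 : ∀ W : Finset (Fin n),
      ∑ 𝒯 ∈ A.powerset, (if ∀ T ∈ 𝒯, Disjoint W T then (-1:ℤ)^W.card * (-1:ℤ)^𝒯.card else 0)
      = (if (A.filter (fun T => Disjoint W T)) = ∅ then (-1:ℤ)^W.card else 0) := by
    intro W
    have h1 : (if (A.filter (fun T => Disjoint W T)) = ∅ then ((-1:ℤ))^W.card else 0)
        = ∑ 𝒯 ∈ (A.filter (fun T => Disjoint W T)).powerset, (-1:ℤ)^W.card * (-1:ℤ)^𝒯.card := by
      rw [← mul_sum, sum_powerset_neg_one_pow_card]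
      by_cases h : (A.filter (fun T => Disjoint W T)) = ∅ <;> simp [h]
    rw [h1, ← sum_filter]
    apply Finset.sum_congr _ (fun _ _ => rfl)
    ext 𝒯
    simp only [mem_filter, mem_powerset]
    constructor
    · rintro ⟨h1, h2⟩ T hT
      exact mem_filter.mpr ⟨h1 hT, h2 T hT⟩
    · intro h
      exact ⟨fun T hT => (mem_filter.mp (h hT)).1, fun T hT => (mem_filter.mp (h hT)).2⟩
  simp_rw [step3]
  -- the emptiness condition
  have step4 : ∀ W : Finset (Fin n),
      ((A.filter (fun T => Disjoint W T)) = ∅) ↔ (n - W.card < m) := by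
    intro W
    constructor
    · intro h
      by_contra hlt
      push_neg at hlt
      have hc : m ≤ (univ \ W).card := by
        rw [Finset.card_sdiff_of_subset (subset_univ W), Finset.card_univ, Fintype.card_fin]
        exact hlt
      obtain ⟨T, hT, hTc⟩ := Finset.exists_subset_card_eq hc
      have : T ∈ A.filter (fun T => Disjoint W T) := by
        rw [mem_filter, hA, mem_filter]
        refine ⟨⟨mem_univ _, hTc⟩, ?_⟩
        rw [disjoint_comm]
        exact Finset.disjoint_of_subset_left hT (Finset.sdiff_disjoint)
      rw [h] at this
      exact absurd this (Finset.notMem_empty _)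
    · intro h
      rw [Finset.eq_empty_iff_forall_notMem]
      intro T hT
      rw [mem_filter, hA, mem_filter] at hT
      obtain ⟨⟨-, hTc⟩, hdisj⟩ := hT
      have hsub : T ⊆ univ \ W := by
        intro x hx
        rw [Finset.mem_sdiff]
        exact ⟨mem_univ _, fun hxW => (Finset.disjoint_left.mp hdisj hxW) hx⟩
      have := Finset.card_le_card hsub
      rw [hTc, Finset.card_sdiff_of_subset (subset_univ W), Finset.card_univ, Fintype.card_fin] at this
      omega
  have step4' : ∀ W ∈ (univ : Finset (Fin n)).powerset,
      (if (A.filter (fun T => Disjoint W T)) = ∅ then (-1:ℤ)^W.card else 0)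
      = (if n - W.card < m then (-1:ℤ)^W.card else 0) := by
    intro W _
    by_cases h : n - W.card < m
    · rw [if_pos ((step4 W).mpr h), if_pos h]
    · rw [if_neg (fun he => h ((step4 W).mp he)), if_neg h]
  rw [Finset.sum_congr rfl step4']
  -- sum over cardinalities
  have := Finset.sum_powerset_apply_card (x := (univ : Finset (Fin n)))
    (fun k => if n - k < m then (-1:ℤ)^k else 0)
  rw [Finset.card_univ, Fintype.card_fin] at this
  rw [this]
  have smul_eq : ∀ k ∈ range (n+1), n.choose k • (if n - k < m then (-1:ℤ)^k else 0)
      = (if n - k < m then (-1:ℤ)^k * (n.choose k) else 0) := by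
    intro k _
    by_cases h : n - k < m <;> simp [h, nsmul_eq_mul, mul_comm]
  rw [Finset.sum_congr rfl smul_eq]
  have split : ∀ k ∈ range (n+1), (if n - k < m then (-1:ℤ)^k * (n.choose k) else 0)
      = (-1:ℤ)^k * (n.choose k) - (if k ≤ n - m then (-1:ℤ)^k * (n.choose k) else 0) := by
    intro k _
    by_cases h : n - k < m
    · rw [if_pos h, if_neg (by omega), sub_zero]
    · rw [if_neg h, if_pos (by omega), sub_self]
  rw [Finset.sum_congr rfl split, Finset.sum_sub_distrib,
    Int.alternating_sum_range_choose_of_ne (by omega : n ≠ 0), ← Finset.sum_filter]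
  have hfil : (range (n+1)).filter (fun k => k ≤ n - m) = range (n - m + 1) := by
    ext k; simp only [mem_filter, mem_range]; omega
  rw [hfil, partial_alt n hn (n - m)]
  have hcs : (n-1).choose (n-m) = (n-1).choose (m-1) := by
    have h1 : (n-1) - (m-1) = n - m := by omega
    rw [← h1, Nat.choose_symm (by omega : m - 1 ≤ n - 1)]
  rw [hcs, pow_succ]
  ring

end P5

section Aux7

/-- Recover the set of copies from a union of copies. -/
noncomputable def uncopies {l n : ℕ} (hl0 : 0 < l) (E : Finset (Fin (n*l))) :
    Finset (Fin n) :=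
  Finset.univ.filter (fun c => posIn c (⟨0, hl0⟩ : Fin l) ∈ E)

lemma uncopies_copiesF {l n : ℕ} (hl0 : 0 < l) (T : Finset (Fin n)) :
    uncopies hl0 (copiesF hl0 T) = T := by
  ext c
  rw [uncopies, Finset.mem_filter, mem_copiesF, copyFin_posIn]
  simp

end Aux7

/-- For an indecomposable permutation `λ` of length `ℓ > 1` and
`1 ≤ m ≤ n`, `Σ_{S ∈ EZ^{λ^m,λ^n}} (−1)^{|S|} = (−1)^{n−m−1}·C(n−1,m−1)`.
(The sign `(−1)^{n−m−1}` is written `(−1)^{n−m+1}`.) -/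

theorem EZsum_dpow {l : ℕ} (lam : Equiv.Perm (Fin l)) (hl : 1 < l)
    (hind : Indecomp ⟨l, lam⟩) (m n : ℕ) (hm : 1 ≤ m) (hmn : m ≤ n) :
    EZsum ⟨m * l, dpow lam m⟩ (dpow lam n) =
      (-1 : ℤ) ^ (n - m + 1) * ((n - 1).choose (m - 1) : ℤ) := by
  have hl0 : 0 < l := by omega
  have hehat : ∀ E : Finset (Fin (n*l)), EhatMem ⟨m*l, dpow lam m⟩ (dpow lam n) E
      ↔ ∃ T : Finset (Fin n), T.card = m ∧ E = copiesF hl0 T := by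
    intro E
    constructor
    · rintro ⟨hemb, -⟩
      exact isEmb_structure lam hl hl0 hind hemb
    · rintro ⟨T, hT, rfl⟩
      refine ⟨isEmb_copies lam hl0 T hT, ?_⟩
      intro i j hb hij hi
      rw [mem_copiesF] at hi ⊢
      have := blockIdx_eq_copy lam hl hind hij hb
      rw [show copyFin hl0 j = copyFin hl0 i from Fin.ext this.symm]
      exact hi
  have hEZ : ∀ S : Finset (Finset (Fin (n*l))),
      EZmem ⟨m*l, dpow lam m⟩ (dpow lam n) S ↔
      ∃ 𝒯 : Finset (Finset (Fin n)),
        (𝒯.Nonempty ∧ (∀ T ∈ 𝒯, T.card = m) ∧ ∀ c : Fin n, ∃ T ∈ 𝒯, c ∈ T)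
        ∧ S = 𝒯.image (copiesF hl0) := by
    intro S
    constructor
    · rintro ⟨hne, hall, hcov⟩
      refine ⟨S.image (uncopies hl0), ⟨hne.image _, ?_, ?_⟩, ?_⟩
      · intro T hT
        obtain ⟨E, hES, rfl⟩ := Finset.mem_image.mp hT
        obtain ⟨T', hc, rfl⟩ := (hehat E).mp (hall E hES)
        rw [uncopies_copiesF]
        exact hc
      · intro c
        obtain ⟨E, hES, hcE⟩ := hcov (posIn c ⟨0, hl0⟩)
        refine ⟨uncopies hl0 E, Finset.mem_image_of_mem _ hES, ?_⟩
        rw [uncopies, Finset.mem_filter]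
        exact ⟨Finset.mem_univ _, hcE⟩
      · ext E
        rw [Finset.mem_image]
        constructor
        · intro hES
          obtain ⟨T, hT, rfl⟩ := (hehat E).mp (hall E hES)
          exact ⟨uncopies hl0 (copiesF hl0 T), Finset.mem_image_of_mem _ hES,
            by rw [uncopies_copiesF]⟩
        · rintro ⟨T, hT, rfl⟩
          obtain ⟨E', hE', rfl⟩ := Finset.mem_image.mp hT
          obtain ⟨T', hT', rfl⟩ := (hehat E').mp (hall E' hE')
          rw [uncopies_copiesF]
          exact hE'
    · rintro ⟨𝒯, ⟨hne, hcardm, hcov⟩, rfl⟩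
      refine ⟨hne.image _, ?_, ?_⟩
      · intro E hE
        obtain ⟨T, hT, rfl⟩ := Finset.mem_image.mp hE
        exact (hehat _).mpr ⟨T, hcardm T hT, rfl⟩
      · intro j
        obtain ⟨T, hT, hcT⟩ := hcov (copyFin hl0 j)
        exact ⟨copiesF hl0 T, Finset.mem_image_of_mem _ hT, (mem_copiesF hl0 T j).mpr hcT⟩
  have himgid : ∀ 𝒯 : Finset (Finset (Fin n)),
      (𝒯.image (copiesF hl0)).image (uncopies hl0) = 𝒯 := by
    intro 𝒯
    rw [Finset.image_image,
      show ((uncopies hl0) ∘ (copiesF hl0)) = id from funext (uncopies_copiesF hl0),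
      Finset.image_id]
  have hcinj : Function.Injective (copiesF (n := n) hl0) :=
    fun a b h => copiesF_injective hl0 h
  unfold EZsum
  rw [← cover_sum n m hm hmn]
  apply Finset.sum_nbij' (i := fun S => S.image (uncopies hl0))
    (j := fun 𝒯 => 𝒯.image (copiesF hl0))
  · intro S hS
    rw [Finset.mem_filter] at hS
    obtain ⟨𝒯, hprops, rfl⟩ := (hEZ S).mp hS.2
    rw [Finset.mem_filter, himgid]
    exact ⟨Finset.mem_univ _, hprops⟩
  · intro 𝒯 h𝒯
    rw [Finset.mem_filter] at h𝒯
    rw [Finset.mem_filter]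
    exact ⟨Finset.mem_univ _, (hEZ _).mpr ⟨𝒯, h𝒯.2, rfl⟩⟩
  · intro S hS
    rw [Finset.mem_filter] at hS
    obtain ⟨𝒯, hprops, rfl⟩ := (hEZ S).mp hS.2
    rw [himgid]
  · intro 𝒯 h𝒯
    exact himgid 𝒯
  · intro S hS
    rw [Finset.mem_filter] at hS
    obtain ⟨𝒯, hprops, rfl⟩ := (hEZ S).mp hS.2
    rw [himgid, Finset.card_image_of_injective _ hcinj]
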